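/- Let b be a nonzero integer and c, d integers with gcd(b,c)=1 and cd ≡ 1 (mod b). Then the rank-two lattices Λ_{b,c} and Λ_{b,d} with Gram matrices [[0,b],[b,2c]] and [[0,b],[b,2d]] are isomorphic, i.e., there exists A ∈ GL(2,ℤ) with ᵀA·[[0,b],[b,2c]]·A = [[0,b],[b,2d]]. -/
import Mathlib


open Matrix

/-- For b ≠ 0, gcd(b,c)=1 and cd ≡ 1 (mod b), the lattices Λ_{b,c} and Λ_{b,d}
with Gram matrices [[0,b],[b,2c]] and [[0,b],[b,2d]] are isomorphic. -/
theorem stmt0 (b c d : ℤ) (hb : b ≠ 0) (hgcd : Int.gcd b c = 1)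
    (hcd : c * d ≡ 1 [ZMOD b]) :
    ∃ A : Matrix (Fin 2) (Fin 2) ℤ, IsUnit A.det ∧
      Aᵀ * !![0, b; b, 2*c] * A = !![0, b; b, 2*d] := by
  have hdvd : b ∣ 1 - c * d := hcd.dvd
  obtain ⟨x, hx⟩ := hdvd
  refine ⟨!![-c, x; b, d], ?_, ?_⟩
  · have hdet : (!![-c, x; b, d] : Matrix (Fin 2) (Fin 2) ℤ).det = -1 := by
      rw [Matrix.det_fin_two_of]
      linarith [hx.symm ▸ (by ring : b * x = b * x)]
    rw [hdet]
    exact isUnit_one.neg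
  · ext i j
    fin_cases i <;> fin_cases j <;>
      simp [Matrix.mul_apply, Fin.sum_univ_two, Matrix.transpose_apply, Matrix.vecHead, Matrix.vecTail] <;>
      first
        | linear_combination -b * hx
        | linear_combination -2 * d * hx
        | ring
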